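/- Let K ⊆ ℝⁿ be measurable with finite positive volume, σ > 0, Z ∼ N(0, Iₙ) standard Gaussian in ℝⁿ, and let g_K(r) = |K ∩ rB|/|K| where B is the unit Euclidean ball. Let r_eff(K) satisfy |r_eff(K)·B| = |K|, and let W ∼ χ²_{n+2}. Then Pr(σZ ∈ K) = E[ g_K(√(σ²W)) / (σ²W / r_eff(K)²)^{n/2} ]. -/

import Mathlib

open MeasureTheory Real Set
open scoped ENNReal

private lemma aux_integrand (n : ℕ) (hn : 0 < n) (σ : ℝ) (hσ : 0 < σ) (Vn reff VK m : ℝ)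
    (hVK : 0 < VK) (hVnpos : 0 < Vn)
    (hreff : reff = (VK / Vn) ^ ((1 : ℝ) / n))
    (w : ℝ) (hw : 0 < w) :
    (w ^ ((n : ℝ) / 2) * Real.exp (-w / 2) /
        (2 ^ (((n : ℝ) + 2) / 2) * Real.Gamma (((n : ℝ) + 2) / 2))) *
      ((m / VK) / (σ ^ 2 * w / reff ^ 2) ^ ((n : ℝ) / 2))
    = ((2:ℝ) ^ (((n:ℝ)+2)/2) * Real.Gamma (((n:ℝ)+2)/2) * σ ^ n * Vn)⁻¹ *
        (Real.exp (-w/2) * m) := by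
  have ha : 0 < VK / Vn := div_pos hVK hVnpos
  have hreff2 : ((reff ^ (2:ℕ)) : ℝ) ^ ((n:ℝ)/2) = VK / Vn := by
    rw [hreff, ← Real.rpow_natCast ((VK/Vn) ^ ((1:ℝ)/n)) 2, ← Real.rpow_mul ha.le,
      ← Real.rpow_mul ha.le,
      show (1:ℝ)/n * ((2:ℕ):ℝ) * ((n:ℝ)/2) = 1 by
        push_cast; field_simp, Real.rpow_one]
  have h4 : ((σ ^ (2:ℕ)) : ℝ) ^ ((n:ℝ)/2) = σ ^ n := by
    rw [← Real.rpow_natCast σ 2, ← Real.rpow_mul hσ.le,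
      show ((2:ℕ):ℝ) * ((n:ℝ)/2) = (n:ℝ) by push_cast; ring, Real.rpow_natCast]
  have hden : (σ ^ 2 * w / reff ^ 2 : ℝ) ^ ((n : ℝ) / 2)
      = σ ^ n * w ^ ((n:ℝ)/2) / (VK / Vn) := by
    rw [Real.div_rpow (by positivity) (by positivity),
      Real.mul_rpow (sq_nonneg σ) hw.le, h4, hreff2]
  rw [hden]
  have hG : 0 < Real.Gamma (((n:ℝ)+2)/2) := Real.Gamma_pos_of_pos (by positivity)
  have hwp : (0:ℝ) < w ^ ((n:ℝ)/2) := Real.rpow_pos_of_pos hw _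
  have h2' : (0:ℝ) < (2:ℝ) ^ (((n:ℝ)+2)/2) := Real.rpow_pos_of_pos (by norm_num) _
  have hσn : (0:ℝ) < σ ^ n := pow_pos hσ n
  field_simp

private lemma aux_const (n : ℕ) (hn : 0 < n) (σ : ℝ) (hσ : 0 < σ) (Vn : ℝ)
    (hVn' : Vn = Real.sqrt π ^ n / Real.Gamma ((n:ℝ)/2 + 1)) :
    (2 * π * σ ^ 2) ^ (-(n : ℝ) / 2)
      = ((2:ℝ) ^ (((n:ℝ)+2)/2) * Real.Gamma (((n:ℝ)+2)/2) * σ ^ n * Vn)⁻¹ * 2 := by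
  have hG : 0 < Real.Gamma ((n:ℝ)/2 + 1) := Real.Gamma_pos_of_pos (by positivity)
  have h1 : Real.Gamma (((n:ℝ)+2)/2) = Real.Gamma ((n:ℝ)/2 + 1) := by ring_nf
  have h2 : (2:ℝ) ^ (((n:ℝ)+2)/2) = 2 ^ ((n:ℝ)/2) * 2 := by
    rw [show ((n:ℝ)+2)/2 = (n:ℝ)/2 + 1 by ring, Real.rpow_add (by norm_num), Real.rpow_one]
  have h3 : (Real.sqrt π) ^ n = π ^ ((n:ℝ)/2) := by
    rw [Real.sqrt_eq_rpow, ← Real.rpow_natCast (π ^ ((1:ℝ)/2)) n, ← Real.rpow_mul pi_pos.le]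
    ring_nf
  have h4 : ((σ ^ (2:ℕ)) : ℝ) ^ ((n:ℝ)/2) = σ ^ n := by
    rw [← Real.rpow_natCast σ 2, ← Real.rpow_mul hσ.le,
      show ((2:ℕ):ℝ) * ((n:ℝ)/2) = (n:ℝ) by push_cast; ring, Real.rpow_natCast]
  have h5 : (2 * π * σ ^ 2 : ℝ) ^ (-(n : ℝ) / 2)
      = (2 ^ ((n:ℝ)/2) * π ^ ((n:ℝ)/2) * σ ^ n)⁻¹ := by
    rw [show (-(n : ℝ) / 2) = -((n:ℝ)/2) by ring, Real.rpow_neg (by positivity),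
      Real.mul_rpow (by positivity) (sq_nonneg σ), Real.mul_rpow (by norm_num) pi_pos.le, h4]
  rw [h5, hVn', h1, h2, h3]
  have hπ : (0:ℝ) < π ^ ((n:ℝ)/2) := Real.rpow_pos_of_pos pi_pos _
  have h2' : (0:ℝ) < (2:ℝ) ^ ((n:ℝ)/2) := Real.rpow_pos_of_pos (by norm_num) _
  have hσn : (0:ℝ) < σ ^ n := pow_pos hσ n
  field_simp


private lemma aux_fubini (n : ℕ)
    (K : Set (EuclideanSpace ℝ (Fin n))) (hKm : MeasurableSet K)
    (hKfin : volume K < ⊤) (σ : ℝ) (hσ : 0 < σ) :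
    ∫ w in Set.Ioi (0:ℝ), Real.exp (-w/2) *
        (volume (K ∩ Metric.closedBall (0 : EuclideanSpace ℝ (Fin n))
          (Real.sqrt (σ^2*w)))).toReal
      = ∫ x in K, 2 * Real.exp (-‖x‖^2 / (2*σ^2)) := by
  set m : ℝ → ℝ≥0∞ := fun r => volume (K ∩ Metric.closedBall (0 : EuclideanSpace ℝ (Fin n)) r) with hm
  have hmono : Monotone m := fun r s hrs =>
    measure_mono (inter_subset_inter_right _ (Metric.closedBall_subset_closedBall hrs))
  have hmmeas : Measurable m := hmono.measurable
  have hmfin : ∀ r, m r < ⊤ := fun r =>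
    lt_of_le_of_lt (measure_mono (inter_subset_left)) hKfin
  -- the set S
  set S : Set (ℝ × EuclideanSpace ℝ (Fin n)) := {p | ‖p.2‖^2 ≤ σ^2 * p.1} with hSdef
  have hS : MeasurableSet S := by
    apply measurableSet_le
    · exact (continuous_snd.norm.pow 2).measurable
    · exact (continuous_const.mul continuous_fst).measurable
  -- LHS to lintegral
  have hfmeas : Measurable fun w => Real.exp (-w/2) * (m (Real.sqrt (σ^2*w))).toReal := by
    apply ((Real.continuous_exp.comp (by continuity)).measurable).mul
    exact (ENNReal.measurable_toReal.comp
      (hmmeas.comp ((continuous_sqrt.comp (by continuity)).measurable)))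
  have hLHS : ∫ w in Set.Ioi (0:ℝ), Real.exp (-w/2) * (m (Real.sqrt (σ^2*w))).toReal
      = (∫⁻ w in Set.Ioi (0:ℝ),
          ENNReal.ofReal (Real.exp (-w/2) * (m (Real.sqrt (σ^2*w))).toReal)).toReal := by
    apply integral_eq_lintegral_of_nonneg_ae
    · exact Filter.Eventually.of_forall fun w => by positivity
    · exact hfmeas.aestronglyMeasurable
  -- RHS to lintegral
  have hRHS : ∫ x in K, 2 * Real.exp (-‖x‖^2 / (2*σ^2))
      = (∫⁻ x in K, ENNReal.ofReal (2 * Real.exp (-‖x‖^2 / (2*σ^2)))).toReal := by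
    apply integral_eq_lintegral_of_nonneg_ae
    · exact Filter.Eventually.of_forall fun x => by positivity
    · exact (by fun_prop : Measurable fun x : EuclideanSpace ℝ (Fin n) => 2 * Real.exp (-‖x‖^2 / (2*σ^2))).aestronglyMeasurable
  rw [hLHS, hRHS]
  congr 1
  -- main lintegral identity
  calc ∫⁻ w in Set.Ioi (0:ℝ),
        ENNReal.ofReal (Real.exp (-w/2) * (m (Real.sqrt (σ^2*w))).toReal)
      = ∫⁻ w in Set.Ioi (0:ℝ), ∫⁻ x in K,
          ENNReal.ofReal (Real.exp (-w/2)) * S.indicator (fun _ => 1) (w, x) := by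
        apply setLIntegral_congr_fun measurableSet_Ioi
        intro w hw
        have hball : {x : EuclideanSpace ℝ (Fin n) | (w, x) ∈ S} = Metric.closedBall (0 : EuclideanSpace ℝ (Fin n)) (Real.sqrt (σ^2*w)) := by
          ext x
          simp only [hSdef, mem_setOf_eq, Metric.mem_closedBall, dist_zero_right]
          rw [Real.le_sqrt (norm_nonneg x) (mul_nonneg (sq_nonneg σ) (le_of_lt (mem_Ioi.mp hw)))]
        have : ∀ x : EuclideanSpace ℝ (Fin n), S.indicator (fun _ => (1:ℝ≥0∞)) (w, x)
            = ({x : EuclideanSpace ℝ (Fin n) | (w, x) ∈ S}).indicator (fun _ => 1) x := by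
          intro x; simp only [Set.indicator_apply, mem_setOf_eq]
        simp_rw [this, hball]
        rw [lintegral_const_mul _ ((measurable_const.indicator measurableSet_closedBall))]
        rw [lintegral_indicator measurableSet_closedBall, setLIntegral_one,
          Measure.restrict_apply measurableSet_closedBall, Set.inter_comm]
        rw [ENNReal.ofReal_mul (Real.exp_nonneg _), ENNReal.ofReal_toReal (hmfin _).ne]
    _ = ∫⁻ x in K, ∫⁻ w in Set.Ioi (0:ℝ),
          ENNReal.ofReal (Real.exp (-w/2)) * S.indicator (fun _ => 1) (w, x) := by
        apply lintegral_lintegral_swap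
        apply Measurable.aemeasurable
        apply Measurable.mul
        · exact ENNReal.measurable_ofReal.comp (by fun_prop)
        · exact measurable_const.indicator hS
    _ = ∫⁻ x in K, ENNReal.ofReal (2 * Real.exp (-‖x‖^2 / (2*σ^2))) := by
        apply setLIntegral_congr_fun hKm
        intro x _
        set t : ℝ := ‖x‖^2 / σ^2 with ht
        have ht0 : 0 ≤ t := by positivity
        have hind : ∀ w : ℝ, ENNReal.ofReal (Real.exp (-w/2)) * S.indicator (fun _ => 1) (w, x)
            = (Set.Ici t).indicator (fun w => ENNReal.ofReal (Real.exp (-w/2))) w := by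
          intro w
          have hiff : ‖x‖^2 ≤ σ^2 * w ↔ t ≤ w := by
            rw [ht, div_le_iff₀ (by positivity), mul_comm]
          simp only [hSdef, Set.indicator_apply, mem_setOf_eq, mem_Ici]
          by_cases h : ‖x‖^2 ≤ σ^2 * w
          · rw [if_pos h, if_pos (hiff.mp h), mul_one]
          · rw [if_neg h, if_neg (fun hc => h (hiff.mpr hc)), mul_zero]
        simp_rw [hind]
        rw [lintegral_indicator measurableSet_Ici,
          Measure.restrict_restrict measurableSet_Ici]
        have hset : Measure.restrict volume (Set.Ici t ∩ Set.Ioi 0)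
            = Measure.restrict volume (Set.Ioi t) := by
          rcases eq_or_lt_of_le ht0 with h0 | h0
          · rw [← h0, Set.inter_eq_right.mpr (Set.Ioi_subset_Ici_self)]
          · have hi : Set.Ici t ∩ Set.Ioi 0 = Set.Ici t :=
              Set.inter_eq_left.mpr (fun y hy => lt_of_lt_of_le h0 hy)
            rw [hi, Measure.restrict_congr_set (Ioi_ae_eq_Ici).symm]
        rw [hset]
        have hint : IntegrableOn (fun w : ℝ => Real.exp (-w/2)) (Set.Ioi t) := by
          have h := exp_neg_integrableOn_Ioi t (by norm_num : (0:ℝ) < 1/2)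
          exact h.congr_fun (fun w _ => by norm_num; congr 1; ring) measurableSet_Ioi
        rw [← ofReal_integral_eq_lintegral_ofReal hint
          (Filter.Eventually.of_forall fun w => Real.exp_nonneg _)]
        congr 1
        have : ∫ w in Set.Ioi t, Real.exp (-w/2)
            = ∫ w in Set.Ioi t, (fun u => Real.exp (-u)) (1/2 * w) := by
          congr 1; funext w; ring_nf
        rw [this, integral_comp_mul_left_Ioi (fun u => Real.exp (-u)) t
          (by norm_num : (0:ℝ) < 1/2), integral_exp_neg_Ioi]
        rw [smul_eq_mul]
        rw [show -(1/2 * t) = -‖x‖^2/(2*σ^2) by rw [ht]; field_simp]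
        norm_num

/-- For a measurable set `K ⊆ ℝⁿ` of finite positive volume and `σ > 0`, the Gaussian
probability `Pr(σZ ∈ K)` equals `E[ g_K(√(σ²W)) / (σ²W / r_eff(K)²)^{n/2} ]` where
`W ∼ χ²_{n+2}` (written out as explicit integrals against the densities). -/
theorem gaussian_measure_as_chisq_expectation (n : ℕ) (hn : 0 < n)
    (K : Set (EuclideanSpace ℝ (Fin n))) (hKm : MeasurableSet K)
    (hKpos : 0 < volume K) (hKfin : volume K < ⊤)
    (σ : ℝ) (hσ : 0 < σ)
    (gK : ℝ → ℝ)
    (hgK : ∀ r, gK r =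
      (volume (K ∩ Metric.closedBall (0 : EuclideanSpace ℝ (Fin n)) r)).toReal /
        (volume K).toReal)
    (Vn reff : ℝ)
    (hVn : Vn = (volume (Metric.closedBall (0 : EuclideanSpace ℝ (Fin n)) 1)).toReal)
    (hreff : reff = ((volume K).toReal / Vn) ^ ((1 : ℝ) / n)) :
    ∫ x in K, (2 * π * σ ^ 2) ^ (-(n : ℝ) / 2) * Real.exp (-‖x‖ ^ 2 / (2 * σ ^ 2)) =
      ∫ w in Set.Ioi (0 : ℝ),
        (w ^ ((n : ℝ) / 2) * Real.exp (-w / 2) /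
            (2 ^ (((n : ℝ) + 2) / 2) * Real.Gamma (((n : ℝ) + 2) / 2))) *
          (gK (Real.sqrt (σ ^ 2 * w)) / (σ ^ 2 * w / reff ^ 2) ^ ((n : ℝ) / 2)) := by
  have hVK : 0 < (volume K).toReal := ENNReal.toReal_pos hKpos.ne' hKfin.ne
  have hVn' : Vn = Real.sqrt π ^ n / Real.Gamma ((n:ℝ)/2 + 1) := by
    have : Nonempty (Fin n) := ⟨⟨0, hn⟩⟩
    rw [hVn, EuclideanSpace.volume_closedBall]
    have hpos : 0 ≤ Real.sqrt π ^ (Fintype.card (Fin n)) /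
        Real.Gamma ((Fintype.card (Fin n) : ℝ)/2 + 1) := by
      have hG : 0 < Real.Gamma ((Fintype.card (Fin n) : ℝ)/2 + 1) :=
        Real.Gamma_pos_of_pos (by positivity)
      positivity
    simp only [Fintype.card_fin] at *
    rw [ENNReal.ofReal_one, one_pow, one_mul, ENNReal.toReal_ofReal hpos]
  have hG : 0 < Real.Gamma ((n:ℝ)/2 + 1) := Real.Gamma_pos_of_pos (by positivity)
  have hVnpos : 0 < Vn := by rw [hVn']; positivity
  set c : ℝ := ((2:ℝ) ^ (((n:ℝ)+2)/2) * Real.Gamma (((n:ℝ)+2)/2) * σ ^ n * Vn)⁻¹ with hc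
  calc ∫ x in K, (2 * π * σ ^ 2) ^ (-(n : ℝ) / 2) * Real.exp (-‖x‖ ^ 2 / (2 * σ ^ 2))
      = ∫ x in K, c * (2 * Real.exp (-‖x‖ ^ 2 / (2 * σ ^ 2))) := by
        apply setIntegral_congr_fun hKm
        intro x _
        rw [aux_const n hn σ hσ Vn hVn']
        ring
    _ = c * ∫ x in K, 2 * Real.exp (-‖x‖ ^ 2 / (2 * σ ^ 2)) := integral_const_mul c _
    _ = c * ∫ w in Set.Ioi (0:ℝ), Real.exp (-w/2) *
          (volume (K ∩ Metric.closedBall (0 : EuclideanSpace ℝ (Fin n))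
            (Real.sqrt (σ^2*w)))).toReal := by
        rw [aux_fubini n K hKm hKfin σ hσ]
    _ = ∫ w in Set.Ioi (0:ℝ), c * (Real.exp (-w/2) *
          (volume (K ∩ Metric.closedBall (0 : EuclideanSpace ℝ (Fin n))
            (Real.sqrt (σ^2*w)))).toReal) := (integral_const_mul c _).symm
    _ = _ := by
        symm
        apply setIntegral_congr_fun measurableSet_Ioi
        intro w hw
        dsimp only
        rw [hgK]
        exact aux_integrand n hn σ hσ Vn reff (volume K).toReal _ hVK hVnpos hreff w
          (mem_Ioi.mp hw)
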